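/- arXiv:1806.01821 — 2 statements merged into one kernel-verified Lean document; each statement's English description precedes it below -/
import Mathlib

section
/- Let μ be any Möbius function for 𝒢, let n ≥ 1, and let H be a finite simple graph with |H| ≠ n − 1 and |H| ≠ n. Then μ(H, K_n) = 0 and μ(H, 𝐾̄_n) = 0; moreover, if n ≥ 3 then also μ(H, C_n) = 0. -/
open SimpleGraph

/-- A finite simple graph, encoded by its number of vertices together with a
simple graph structure on `Fin n`. -/
def FinGraph : Type := Σ n : ℕ, SimpleGraph (Fin n)

namespace FinGraph

/-- The number of vertices of a graph. -/
def order (G : FinGraph) : ℕ := G.1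

/-- Induced containment `H ⊴ G`: there is an injection of the vertices of `H`
into the vertices of `G` which preserves and reflects adjacency (equivalently,
`H` is isomorphic to an induced subgraph of `G`). -/
def Contains (H G : FinGraph) : Prop :=
  ∃ f : Fin H.1 ↪ Fin G.1, ∀ a b : Fin H.1, G.2.Adj (f a) (f b) ↔ H.2.Adj a b

/-- Isomorphism of finite graphs. -/
def Iso (H G : FinGraph) : Prop := Nonempty (H.2 ≃g G.2)

/-- Package a simple graph on an arbitrary finite vertex type as a `FinGraph`. -/
noncomputable def of {V : Type} [Fintype V] (G : SimpleGraph V) : FinGraph :=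
  ⟨Fintype.card V, G.comap ⇑(Fintype.equivFin V).symm⟩

end FinGraph

/-- `T` is a transversal of the interval `[H,G]`: every member lies in `[H,G]`,
distinct members are non-isomorphic, and every graph in `[H,G]` is isomorphic to
a member of `T`. -/
def IsTransversal (H G : FinGraph) (T : Finset FinGraph) : Prop :=
  (∀ X ∈ T, H.Contains X ∧ X.Contains G) ∧
  (∀ X ∈ T, ∀ Y ∈ T, X ≠ Y → ¬ X.Iso Y) ∧
  (∀ X : FinGraph, H.Contains X → X.Contains G → ∃ Y ∈ T, X.Iso Y)

/-- `mu` is a Möbius function for the poset `𝒢` of all finite simple graphs up to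
isomorphism, ordered by induced containment: it is isomorphism invariant, vanishes
on non-comparable pairs, and for every `H ⊴ G` the sum of `mu H ·` over any
transversal of `[H,G]` is `1` if `H ≅ G` and `0` otherwise. -/
def IsMobius (mu : FinGraph → FinGraph → ℤ) : Prop :=
  (∀ H H' G G' : FinGraph, H.Iso H' → G.Iso G' → mu H G = mu H' G') ∧
  (∀ H G : FinGraph, ¬ H.Contains G → mu H G = 0) ∧
  (∀ H G : FinGraph, H.Contains G → ∀ T : Finset FinGraph, IsTransversal H G T →
    (H.Iso G → ∑ X ∈ T, mu H X = 1) ∧ (¬ H.Iso G → ∑ X ∈ T, mu H X = 0))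

namespace FinGraph

lemma iso_refl (G : FinGraph) : G.Iso G := ⟨SimpleGraph.Iso.refl⟩

lemma iso_symm {G H : FinGraph} (h : G.Iso H) : H.Iso G := ⟨h.some.symm⟩

lemma iso_trans {G H K : FinGraph} (h : G.Iso H) (h' : H.Iso K) : G.Iso K :=
  ⟨h.some.trans h'.some⟩

lemma contains_refl (G : FinGraph) : G.Contains G :=
  ⟨Function.Embedding.refl _, fun _ _ => Iff.rfl⟩

lemma contains_trans {G H K : FinGraph} (h : G.Contains H) (h' : H.Contains K) :
    G.Contains K := by
  obtain ⟨f, hf⟩ := h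
  obtain ⟨g, hg⟩ := h'
  exact ⟨f.trans g, fun a b => (hg (f a) (f b)).trans (hf a b)⟩

lemma contains_of_iso {G H : FinGraph} (h : G.Iso H) : G.Contains H := by
  obtain ⟨φ⟩ := h
  exact ⟨φ.toEquiv.toEmbedding, fun a b => φ.map_adj_iff⟩

lemma order_le_of_contains {G H : FinGraph} (h : G.Contains H) : G.1 ≤ H.1 := by
  obtain ⟨f, -⟩ := h
  simpa using Fintype.card_le_of_embedding f

lemma order_eq_of_iso {G H : FinGraph} (h : G.Iso H) : G.1 = H.1 := by
  obtain ⟨φ⟩ := h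
  simpa using Fintype.card_congr φ.toEquiv

lemma iso_of_contains_of_order_eq {G H : FinGraph} (h : G.Contains H) (horder : G.1 = H.1) :
    G.Iso H := by
  obtain ⟨f, hf⟩ := h
  have hbij : Function.Bijective f := by
    rw [Fintype.bijective_iff_injective_and_card]
    exact ⟨f.injective, by simpa using horder⟩
  exact ⟨⟨Equiv.ofBijective f hbij, fun {a b} => hf a b⟩⟩

end FinGraph

open FinGraph

/-- Every interval has a transversal. -/
lemma exists_transversal (H G : FinGraph) : ∃ T : Finset FinGraph, IsTransversal H G T := by
  classical
  letI s : Setoid FinGraph := ⟨FinGraph.Iso, ⟨iso_refl, iso_symm, iso_trans⟩⟩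
  let S : Finset FinGraph :=
    (((Finset.range (G.1 + 1)).sigma fun m => (Finset.univ : Finset (SimpleGraph (Fin m)))) :
      Finset (Σ m : ℕ, SimpleGraph (Fin m))).filter
      (fun X => H.Contains X ∧ X.Contains G)
  have hmemS : ∀ X : FinGraph, H.Contains X → X.Contains G → X ∈ S := by
    intro X hHX hXG
    have hord : X.1 ≤ G.1 := order_le_of_contains hXG
    refine Finset.mem_filter.2 ⟨?_, hHX, hXG⟩
    have : (⟨X.1, X.2⟩ : Σ m : ℕ, SimpleGraph (Fin m)) ∈
        ((Finset.range (G.1 + 1)).sigma fun m => (Finset.univ : Finset (SimpleGraph (Fin m)))) :=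
      Finset.mem_sigma.2 ⟨Finset.mem_range.2 (Nat.lt_succ_of_le hord), Finset.mem_univ _⟩
    exact this
  refine ⟨(S.image (Quotient.mk s)).image Quotient.out, ?_, ?_, ?_⟩
  · intro X hX
    simp only [Finset.mem_image] at hX
    obtain ⟨q, hq, rfl⟩ := hX
    obtain ⟨Y, hY, rfl⟩ := hq
    have hYS := Finset.mem_filter.1 hY
    have hiso : FinGraph.Iso (Quotient.out (Quotient.mk s Y)) Y := by
      have := Quotient.exact (Quotient.out_eq (Quotient.mk s Y)); exact this
    exact ⟨contains_trans hYS.2.1 (contains_of_iso (iso_symm hiso)),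
      contains_trans (contains_of_iso hiso) hYS.2.2⟩
  · intro X hX Y hY hXY hiso
    simp only [Finset.mem_image] at hX hY
    obtain ⟨q, -, rfl⟩ := hX
    obtain ⟨q', -, rfl⟩ := hY
    have : q = q' := by
      rw [← Quotient.out_eq q, ← Quotient.out_eq q']
      exact Quotient.sound hiso
    exact hXY (by rw [this])
  · intro X hHX hXG
    have hXS := hmemS X hHX hXG
    refine ⟨Quotient.out (Quotient.mk s X), ?_, ?_⟩
    · exact Finset.mem_image.2 ⟨Quotient.mk s X, Finset.mem_image.2 ⟨X, hXS, rfl⟩, rfl⟩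
    · exact iso_symm (by have := Quotient.exact (Quotient.out_eq (Quotient.mk s X)); exact this)

/-- The Möbius value along a "chain family" vanishes at distance ≥ 2. -/
lemma chain_mu (mu : FinGraph → FinGraph → ℤ) (hmu : IsMobius mu)
    (F : ∀ k : ℕ, SimpleGraph (Fin k))
    (hmono : ∀ i j : ℕ, i ≤ j → FinGraph.Contains ⟨i, F i⟩ ⟨j, F j⟩)
    (hclosed : ∀ (X : FinGraph) (j : ℕ), X.Contains ⟨j, F j⟩ → X.2 = F X.1)
    (m n : ℕ) (h : m + 2 ≤ n) : mu ⟨m, F m⟩ ⟨n, F n⟩ = 0 := by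
  haveI : DecidableEq FinGraph := Classical.decEq _
  have hinj : Function.Injective (fun i : ℕ => (⟨i, F i⟩ : FinGraph)) := by
    intro i j hij
    exact congrArg Sigma.fst hij
  have key : ∀ j : ℕ, m ≤ j →
      (∑ i ∈ Finset.Icc m j, mu ⟨m, F m⟩ ⟨i, F i⟩) = if j = m then 1 else 0 := by
    intro j hmj
    have htrans : IsTransversal ⟨m, F m⟩ ⟨j, F j⟩
        ((Finset.Icc m j).image (fun i => (⟨i, F i⟩ : FinGraph))) := by
      refine ⟨?_, ?_, ?_⟩
      · intro X hX
        obtain ⟨i, hi, rfl⟩ := Finset.mem_image.1 hX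
        obtain ⟨hmi, hij⟩ := Finset.mem_Icc.1 hi
        exact ⟨hmono m i hmi, hmono i j hij⟩
      · intro X hX Y hY hXY hiso
        obtain ⟨i, -, rfl⟩ := Finset.mem_image.1 hX
        obtain ⟨i', -, rfl⟩ := Finset.mem_image.1 hY
        have : i = i' := by simpa using order_eq_of_iso hiso
        exact hXY (by rw [this])
      · intro X h1 h2
        have hX2 : X.2 = F X.1 := hclosed X j h2
        have hXeq : X = ⟨X.1, F X.1⟩ := by
          rw [← hX2]; rfl
        refine ⟨⟨X.1, F X.1⟩, ?_, by rw [← hXeq]; exact iso_refl X⟩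
        refine Finset.mem_image.2 ⟨X.1, Finset.mem_Icc.2 ⟨?_, ?_⟩, rfl⟩
        · have := order_le_of_contains h1; exact this
        · have := order_le_of_contains h2; exact this
    have hsum := hmu.2.2 ⟨m, F m⟩ ⟨j, F j⟩ (hmono m j hmj) _ htrans
    have himg : ∑ X ∈ (Finset.Icc m j).image (β := FinGraph) (fun i => (⟨i, F i⟩ : FinGraph)), mu ⟨m, F m⟩ X
        = ∑ i ∈ Finset.Icc m j, mu ⟨m, F m⟩ ⟨i, F i⟩ :=
      Finset.sum_image (fun x _ y _ hxy => hinj hxy)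
    by_cases hj : j = m
    · subst hj
      simp only [if_pos rfl]
      exact himg.symm.trans (hsum.1 (iso_refl _))
    · simp only [if_neg hj]
      refine himg.symm.trans (hsum.2 (fun hiso => hj ?_))
      simpa using (order_eq_of_iso hiso).symm
  obtain ⟨b, rfl⟩ : ∃ b, n = b + 1 := ⟨n - 1, by omega⟩
  have h1 := key (b + 1) (by omega)
  have h2 := key b (by omega)
  rw [if_neg (by omega)] at h1
  rw [if_neg (by omega)] at h2
  rw [Finset.sum_Icc_succ_top (by omega : m ≤ b + 1), h2] at h1
  linarith

section Cycle

variable {n : ℕ}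

lemma cyc_path_adj (hn : 3 ≤ n) (x y : Fin n) (hx : x.val < n - 1) (hy : y.val < n - 1) :
    (cycleGraph n).Adj x y ↔
      (pathGraph (n - 1)).Adj ⟨x.val, hx⟩ ⟨y.val, hy⟩ := by
  haveI : NeZero n := ⟨by omega⟩
  have hone : (1 : Fin n).val = 1 := by
    rw [Fin.val_one']; exact Nat.mod_eq_of_lt (by omega)
  have key : ∀ a b : Fin n, a.val < n - 1 → b.val < n - 1 →
      ((a - b).val = 1 ↔ a.val = b.val + 1) := by
    intro a b ha hb
    have h1 : (a - b).val = 1 ↔ a - b = 1 := by rw [Fin.ext_iff, hone]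
    rw [h1, sub_eq_iff_eq_add, Fin.ext_iff, Fin.val_add, hone,
      Nat.mod_eq_of_lt (by omega)]
    omega
  rw [cycleGraph_adj', pathGraph_adj, key x y hx hy, key y x hy hx]
  simp only [Fin.val_mk]
  omega

lemma path_contains_cycle (hn : 3 ≤ n) :
    FinGraph.Contains ⟨n - 1, pathGraph (n - 1)⟩ ⟨n, cycleGraph n⟩ := by
  refine ⟨⟨Fin.castLE (Nat.sub_le n 1), Fin.castLE_injective _⟩, fun a b => ?_⟩
  simp only [Function.Embedding.coeFn_mk]
  have ha : (Fin.castLE (by omega : n - 1 ≤ n) a).val < n - 1 := by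
    simpa using a.isLt
  have hb : (Fin.castLE (by omega : n - 1 ≤ n) b).val < n - 1 := by
    simpa using b.isLt
  rw [cyc_path_adj hn _ _ ha hb]
  simp only [Fin.coe_castLE, Fin.eta]

lemma contains_path_of_contains_cycle (hn : 3 ≤ n) (X : FinGraph)
    (hX : X.Contains ⟨n, cycleGraph n⟩) (hlt : X.1 < n) :
    X.Contains ⟨n - 1, pathGraph (n - 1)⟩ := by
  haveI : NeZero n := ⟨by omega⟩
  obtain ⟨f, hf⟩ := hX
  have hnsurj : ¬ Function.Surjective f := by
    intro hs
    have := Fintype.card_le_of_surjective f hs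
    simp only [Fintype.card_fin] at this
    omega
  rw [Function.Surjective] at hnsurj
  push_neg at hnsurj
  obtain ⟨v, hv⟩ := hnsurj
  let e : Fin n ≃ Fin n := Equiv.subRight (v + 1)
  have hev : (e v).val = n - 1 := by
    have h1 : e v = -1 := by
      show v - (v + 1) = -1
      rw [sub_add_eq_sub_sub, sub_self, zero_sub]
    have hv1 : (1 : Fin n).val = 1 := by
      rw [Fin.val_one']; exact Nat.mod_eq_of_lt (by omega)
    rw [h1, Fin.coe_neg, hv1]
    exact Nat.mod_eq_of_lt (by omega)
  have hlt' : ∀ a : Fin X.1, (e (f a)).val < n - 1 := by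
    intro a
    have hne : e (f a) ≠ e v := fun h => hv a (e.injective h)
    have : (e (f a)).val ≠ n - 1 := by
      intro h
      exact hne (Fin.ext (h.trans hev.symm))
    have := (e (f a)).isLt
    omega
  have he : ∀ x y : Fin n, (cycleGraph n).Adj (e x) (e y) ↔ (cycleGraph n).Adj x y := by
    intro x y
    show (cycleGraph n).Adj (x - (v + 1)) (y - (v + 1)) ↔ _
    rw [cycleGraph_adj', cycleGraph_adj', sub_sub_sub_cancel_right, sub_sub_sub_cancel_right]
  refine ⟨⟨fun a => ⟨(e (f a)).val, hlt' a⟩, ?_⟩, ?_⟩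
  · intro a b hab
    simp only [Fin.mk.injEq] at hab
    exact f.injective (e.injective (Fin.ext hab))
  · intro a b
    show (pathGraph (n - 1)).Adj ⟨(e (f a)).val, _⟩ ⟨(e (f b)).val, _⟩ ↔ X.2.Adj a b
    rw [← cyc_path_adj hn _ _ (hlt' a) (hlt' b), he, hf]

end Cycle

/-- For `n ≥ 1` and `|H| ∉ {n-1, n}` we have `μ(H,K_n) = μ(H,K̄_n) = 0`, and
`μ(H,C_n) = 0` when moreover `n ≥ 3`. -/
theorem mobius_complete_empty_cycle (mu : FinGraph → FinGraph → ℤ)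
    (hmu : IsMobius mu) (n : ℕ) (hn : 1 ≤ n) (H : FinGraph)
    (h1 : H.order ≠ n - 1) (h2 : H.order ≠ n) :
    mu H ⟨n, (⊤ : SimpleGraph (Fin n))⟩ = 0 ∧
    mu H ⟨n, (⊥ : SimpleGraph (Fin n))⟩ = 0 ∧
    (3 ≤ n → mu H ⟨n, SimpleGraph.cycleGraph n⟩ = 0) := by
  classical
  have h1' : H.1 ≠ n - 1 := h1
  have h2' : H.1 ≠ n := h2
  refine ⟨?_, ?_, ?_⟩
  · -- complete graph
    by_cases hc : H.Contains ⟨n, (⊤ : SimpleGraph (Fin n))⟩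
    · have hclosed : ∀ (X : FinGraph) (j : ℕ),
          X.Contains ⟨j, (⊤ : SimpleGraph (Fin j))⟩ → X.2 = (⊤ : SimpleGraph (Fin X.1)) := by
        intro X j hX
        obtain ⟨f, hf⟩ := hX
        ext a b
        rw [← hf a b]
        simp [f.injective.ne_iff]
      have hmono : ∀ i j : ℕ, i ≤ j →
          FinGraph.Contains ⟨i, (⊤ : SimpleGraph (Fin i))⟩ ⟨j, (⊤ : SimpleGraph (Fin j))⟩ := by
        intro i j hij
        refine ⟨⟨Fin.castLE hij, Fin.castLE_injective _⟩, fun a b => ?_⟩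
        simp [Fin.castLE_inj, (Fin.castLE_injective hij).ne_iff]
      have hH2 : H.2 = (⊤ : SimpleGraph (Fin H.1)) := hclosed H n hc
      have hHeq : H = ⟨H.1, (⊤ : SimpleGraph (Fin H.1))⟩ := by
        rw [← hH2]; rfl
      have hord : H.1 ≤ n := order_le_of_contains hc
      rw [hHeq]
      exact chain_mu mu hmu (fun k => (⊤ : SimpleGraph (Fin k))) hmono hclosed H.1 n (by omega)
    · exact hmu.2.1 _ _ hc
  · -- empty graph
    by_cases hc : H.Contains ⟨n, (⊥ : SimpleGraph (Fin n))⟩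
    · have hclosed : ∀ (X : FinGraph) (j : ℕ),
          X.Contains ⟨j, (⊥ : SimpleGraph (Fin j))⟩ → X.2 = (⊥ : SimpleGraph (Fin X.1)) := by
        intro X j hX
        obtain ⟨f, hf⟩ := hX
        ext a b
        rw [← hf a b]
        simp
      have hmono : ∀ i j : ℕ, i ≤ j →
          FinGraph.Contains ⟨i, (⊥ : SimpleGraph (Fin i))⟩ ⟨j, (⊥ : SimpleGraph (Fin j))⟩ := by
        intro i j hij
        exact ⟨⟨Fin.castLE hij, Fin.castLE_injective _⟩, fun a b => by simp⟩
      have hH2 : H.2 = (⊥ : SimpleGraph (Fin H.1)) := hclosed H n hc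
      have hHeq : H = ⟨H.1, (⊥ : SimpleGraph (Fin H.1))⟩ := by
        rw [← hH2]; rfl
      have hord : H.1 ≤ n := order_le_of_contains hc
      rw [hHeq]
      exact chain_mu mu hmu (fun k => (⊥ : SimpleGraph (Fin k))) hmono hclosed H.1 n (by omega)
    · exact hmu.2.1 _ _ hc
  · -- cycle graph
    intro hn3
    set C : FinGraph := ⟨n, SimpleGraph.cycleGraph n⟩ with hC
    set P : FinGraph := ⟨n - 1, SimpleGraph.pathGraph (n - 1)⟩ with hP
    by_cases hc : H.Contains C
    · have hord : H.1 ≤ n := order_le_of_contains hc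
      have hklt : H.1 < n - 1 := by omega
      obtain ⟨T, hT⟩ := exists_transversal H C
      obtain ⟨Z, hZT, hZiso⟩ := hT.2.2 C hc (contains_refl C)
      have hZord : Z.1 = n := (order_eq_of_iso hZiso).symm
      have hHC : ¬ H.Iso C := fun h => by
        have := order_eq_of_iso h; simp [hC] at this; omega
      have hsum : ∑ X ∈ T, mu H X = 0 := (hmu.2.2 H C hc T hT).2 hHC
      have hfilter : T.filter (fun X => X.1 = n) = {Z} := by
        ext X
        simp only [Finset.mem_filter, Finset.mem_singleton]
        constructor
        · rintro ⟨hXT, hXn⟩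
          have hXC : X.Contains C := (hT.1 X hXT).2
          have hXiso : X.Iso C := iso_of_contains_of_order_eq hXC hXn
          have hXZ : X.Iso Z := iso_trans hXiso hZiso
          by_contra hne
          exact hT.2.1 X hXT Z hZT hne hXZ
        · rintro rfl
          exact ⟨hZT, hZord⟩
      have hsplit : ∑ X ∈ T, mu H X =
          mu H Z + ∑ X ∈ T.filter (fun X => ¬ X.1 = n), mu H X := by
        rw [← Finset.sum_filter_add_sum_filter_not T (fun X => X.1 = n), hfilter,
          Finset.sum_singleton]
      have hHP : H.Contains P := contains_path_of_contains_cycle hn3 H hc (by omega)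
      have hT2 : IsTransversal H P (T.filter (fun X => ¬ X.1 = n)) := by
        refine ⟨?_, ?_, ?_⟩
        · intro X hX
          obtain ⟨hXT, hXn⟩ := Finset.mem_filter.1 hX
          have hXC := (hT.1 X hXT).2
          have := order_le_of_contains hXC
          exact ⟨(hT.1 X hXT).1,
            contains_path_of_contains_cycle hn3 X hXC (by simp [hC] at this ⊢; omega)⟩
        · intro X hX Y hY
          exact hT.2.1 X (Finset.mem_filter.1 hX).1 Y (Finset.mem_filter.1 hY).1
        · intro Y hHY hYP
          have hYC : Y.Contains C := contains_trans hYP (path_contains_cycle hn3)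
          obtain ⟨W, hWT, hWiso⟩ := hT.2.2 Y hHY hYC
          have hWord : W.1 = Y.1 := (order_eq_of_iso hWiso).symm
          have hYord : Y.1 ≤ n - 1 := order_le_of_contains hYP
          refine ⟨W, Finset.mem_filter.2 ⟨hWT, by omega⟩, hWiso⟩
      have hHPiso : ¬ H.Iso P := fun h => by
        have := order_eq_of_iso h; simp [hP] at this; omega
      have hsum2 : ∑ X ∈ T.filter (fun X => ¬ X.1 = n), mu H X = 0 :=
        (hmu.2.2 H P hHP _ hT2).2 hHPiso
      have hZC : mu H C = mu H Z :=
        hmu.1 H H C Z (iso_refl H) hZiso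
      rw [hsplit, hsum2] at hsum
      omega
    · exact hmu.2.1 _ _ hc
end

section
/- Let μ be any Möbius function for 𝒢, let ∅ denote the graph with no vertices, and let G be a finite simple graph. Then μ(∅,G) = 1 if |G| = 0, μ(∅,G) = −1 if |G| = 1, and μ(∅,G) = 0 if |G| > 1. -/
open SimpleGraph

namespace FinGraph

/-- The empty graph. -/
def E : FinGraph := ⟨0, (⊥ : SimpleGraph (Fin 0))⟩

/-- The one-vertex graph. -/
def K1 : FinGraph := ⟨1, (⊥ : SimpleGraph (Fin 1))⟩

lemma iso_refl_s7 (X : FinGraph) : X.Iso X := ⟨RelIso.refl X.2.Adj⟩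

lemma iso_symm_s7 {X Y : FinGraph} (h : X.Iso Y) : Y.Iso X := ⟨h.some.symm⟩

lemma iso_trans_s7 {X Y Z : FinGraph} (h : X.Iso Y) (h' : Y.Iso Z) : X.Iso Z :=
  ⟨h.some.trans h'.some⟩

lemma iso_order {X Y : FinGraph} (h : X.Iso Y) : X.1 = Y.1 := by
  obtain ⟨e⟩ := h
  simpa using Fintype.card_congr e.toEquiv

lemma contains_of_iso_s7 {X Y : FinGraph} (h : X.Iso Y) : X.Contains Y := by
  obtain ⟨e⟩ := h
  exact ⟨e.toEquiv.toEmbedding, fun a b => e.map_rel_iff⟩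

lemma contains_refl_s7 (X : FinGraph) : X.Contains X :=
  ⟨Function.Embedding.refl _, fun _ _ => Iff.rfl⟩

lemma contains_trans_s7 {X Y Z : FinGraph} (h1 : X.Contains Y) (h2 : Y.Contains Z) :
    X.Contains Z := by
  obtain ⟨f, hf⟩ := h1; obtain ⟨g, hg⟩ := h2
  exact ⟨f.trans g, fun a b => (hg (f a) (f b)).trans (hf a b)⟩

lemma E_contains (G : FinGraph) : E.Contains G :=
  ⟨⟨Fin.elim0, fun a => a.elim0⟩, fun a _ => a.elim0⟩

lemma contains_order_le {X G : FinGraph} (h : X.Contains G) : X.1 ≤ G.1 := by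
  obtain ⟨f, -⟩ := h
  simpa using Fintype.card_le_of_embedding f

lemma iso_of_contains_of_order_eq_s7 {X G : FinGraph} (h : X.Contains G) (he : X.1 = G.1) :
    X.Iso G := by
  obtain ⟨f, hf⟩ := h
  have hbij : Function.Bijective f :=
    (Fintype.bijective_iff_injective_and_card f).2 ⟨f.injective, by simp [he]⟩
  exact ⟨⟨Equiv.ofBijective f hbij, fun {a b} => hf a b⟩⟩

lemma iso_E_of_order_zero {X : FinGraph} (h : X.1 = 0) : X.Iso E :=
  iso_symm_s7 (iso_of_contains_of_order_eq_s7 (E_contains X) h.symm)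

lemma K1_contains {G : FinGraph} (h : 1 ≤ G.1) : K1.Contains G := by
  refine ⟨⟨fun _ => ⟨0, h⟩, fun a b _ => Subsingleton.elim (α := Fin 1) a b⟩, fun a b => ?_⟩
  show G.2.Adj ⟨0, h⟩ ⟨0, h⟩ ↔ K1.2.Adj a b
  constructor
  · intro hadj; exact absurd rfl (G.2.ne_of_adj hadj)
  · intro hadj; exact absurd hadj (fun h' => h')

lemma iso_K1_of_order_one {X : FinGraph} (h : X.1 = 1) : X.Iso K1 :=
  iso_symm_s7 (iso_of_contains_of_order_eq_s7 (K1_contains h.ge) h.symm)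

lemma exists_transversal (G : FinGraph) : ∃ T : Finset FinGraph, IsTransversal E G T := by
  classical
  set n := G.1 with hn
  let s : Setoid FinGraph := ⟨Iso, ⟨iso_refl_s7, iso_symm_s7, iso_trans_s7⟩⟩
  have hfin : {X : FinGraph | X.Contains G}.Finite := by
    apply Set.Finite.subset (Set.finite_range
      (fun p : (Σ k : Fin (n+1), SimpleGraph (Fin k)) => (⟨(p.1 : ℕ), p.2⟩ : FinGraph)))
    intro X hX
    have hle : X.1 ≤ n := contains_order_le hX
    exact ⟨⟨⟨X.1, by omega⟩, X.2⟩, rfl⟩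
  let S : Finset FinGraph := hfin.toFinset
  refine ⟨(S.image (Quotient.mk s)).image Quotient.out, ?_, ?_, ?_⟩
  · intro Y hY
    simp only [Finset.mem_image] at hY
    obtain ⟨c, hc, rfl⟩ := hY
    obtain ⟨X, hX, rfl⟩ := hc
    have hXG : X.Contains G := by simpa [S] using hX
    have hYX : (Quotient.mk s X).out.Iso X := Quotient.exact ((Quotient.mk s X).out_eq)
    exact ⟨E_contains _, contains_trans_s7 (contains_of_iso_s7 hYX) hXG⟩
  · intro X hX Y hY hne hiso
    simp only [Finset.mem_image] at hX hY
    obtain ⟨c, -, rfl⟩ := hX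
    obtain ⟨c', -, rfl⟩ := hY
    have : c = c' := by
      rw [← c.out_eq, ← c'.out_eq]
      exact Quotient.sound hiso
    exact hne (by rw [this])
  · intro X _ hXG
    have hXS : X ∈ S := by simpa [S] using hXG
    refine ⟨(Quotient.mk s X).out, Finset.mem_image_of_mem _ (Finset.mem_image_of_mem _ hXS), ?_⟩
    exact iso_symm_s7 (Quotient.exact ((Quotient.mk s X).out_eq))

lemma not_E_iso {G : FinGraph} (h : G.1 ≠ 0) : ¬ E.Iso G :=
  fun hi => h (iso_order hi).symm

lemma mu_E (mu : FinGraph → FinGraph → ℤ) (hmu : IsMobius mu) :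
    ∀ n : ℕ, ∀ G : FinGraph, G.1 = n →
      mu E G = if n = 0 then 1 else if n = 1 then -1 else 0 := by
  intro n
  induction n using Nat.strong_induction_on with
  | _ n ih =>
    intro G hG
    classical
    obtain ⟨T, hT⟩ := exists_transversal G
    obtain ⟨hT1, hT2, hT3⟩ := hT
    have hsum := hmu.2.2 E G (E_contains G) T ⟨hT1, hT2, hT3⟩
    -- helper: iso elements of T are equal
    have huniq : ∀ X ∈ T, ∀ Y ∈ T, X.Iso Y → X = Y := fun X hX Y hY hi =>
      by_contra fun hne => hT2 X hX Y hY hne hi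
    rcases Nat.lt_or_ge n 2 with h2 | h2
    · interval_cases n
      · -- n = 0
        simp only [if_pos rfl]
        have hiso : E.Iso G := iso_symm_s7 (iso_E_of_order_zero hG)
        have h1 : ∑ X ∈ T, mu E X = 1 := hsum.1 hiso
        obtain ⟨Y, hY, hYiso⟩ := hT3 G (E_contains G) (contains_refl_s7 G)
        have hTY : T = {Y} := by
          refine Finset.eq_singleton_iff_unique_mem.2 ⟨hY, fun X hX => ?_⟩
          have hX0 : X.1 = 0 := Nat.le_zero.1 (hG ▸ contains_order_le (hT1 X hX).2)
          exact huniq X hX Y hY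
            (iso_trans_s7 (iso_E_of_order_zero hX0)
              (iso_trans_s7 hiso hYiso))
        rw [hTY, Finset.sum_singleton] at h1
        rw [hmu.1 E E G Y (iso_refl_s7 E) hYiso]
        exact h1
      · -- n = 1
        norm_num
        have hnot : ¬ E.Iso G := not_E_iso (by omega)
        have h0 : ∑ X ∈ T, mu E X = 0 := hsum.2 hnot
        obtain ⟨Y0, hY0, hY0iso⟩ := hT3 E (E_contains E) (E_contains G)
        obtain ⟨Y1, hY1, hY1iso⟩ := hT3 G (E_contains G) (contains_refl_s7 G)
        have hY0o : Y0.1 = 0 := (iso_order hY0iso).symm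
        have hY1o : Y1.1 = 1 := hG ▸ (iso_order hY1iso).symm
        have hne : Y0 ≠ Y1 := fun h => by rw [h, hY1o] at hY0o; exact one_ne_zero hY0o
        have hTeq : T = {Y0, Y1} := by
          apply Finset.eq_of_subset_of_card_le
          · intro X hX
            have hXle : X.1 ≤ 1 := hG ▸ contains_order_le (hT1 X hX).2
            rcases Nat.le_one_iff_eq_zero_or_eq_one.1 hXle with h | h
            · have : X = Y0 := huniq X hX Y0 hY0
                (iso_trans_s7 (iso_E_of_order_zero h) hY0iso)
              simp [this]
            · have : X = Y1 := huniq X hX Y1 hY1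
                (iso_trans_s7 (iso_K1_of_order_one h) (iso_symm_s7 (iso_K1_of_order_one hY1o)))
              simp [this]
          · rw [Finset.card_pair hne]
            refine Finset.one_lt_card.2 ⟨Y0, hY0, Y1, hY1, hne⟩
        rw [hTeq, Finset.sum_pair hne] at h0
        have hmuY0 : mu E Y0 = 1 := by
          rw [← hmu.1 E E E Y0 (iso_refl_s7 E) hY0iso]
          simpa using ih 0 (by omega) E rfl
        have hmuY1 : mu E Y1 = mu E G :=
          hmu.1 E E Y1 G (iso_refl_s7 E) (iso_symm_s7 hY1iso)
        rw [hmuY0, hmuY1] at h0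
        omega
    · -- n ≥ 2
      rw [if_neg (by omega), if_neg (by omega)]
      have hnot : ¬ E.Iso G := not_E_iso (by omega)
      have h0 : ∑ X ∈ T, mu E X = 0 := hsum.2 hnot
      obtain ⟨Y0, hY0, hY0iso⟩ := hT3 E (E_contains E) (E_contains G)
      obtain ⟨Y1, hY1, hY1iso⟩ := hT3 K1 (E_contains K1) (K1_contains (by omega))
      obtain ⟨Yn, hYn, hYniso⟩ := hT3 G (E_contains G) (contains_refl_s7 G)
      have hY0o : Y0.1 = 0 := (iso_order hY0iso).symm
      have hY1o : Y1.1 = 1 := (iso_order hY1iso).symm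
      have hYno : Yn.1 = n := hG ▸ (iso_order hYniso).symm
      have hne01 : Y0 ≠ Y1 := fun h => by rw [h, hY1o] at hY0o; omega
      have hne0n : Y0 ≠ Yn := fun h => by rw [h, hYno] at hY0o; omega
      have hne1n : Y1 ≠ Yn := fun h => by rw [h, hYno] at hY1o; omega
      set sset : Finset FinGraph := {Y0, Y1, Yn} with hsset
      have hsub : sset ⊆ T := by
        intro X hX
        simp only [hsset, Finset.mem_insert, Finset.mem_singleton] at hX
        rcases hX with rfl | rfl | rfl <;> assumption
      have hrest : ∀ X ∈ T \ sset, mu E X = 0 := by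
        intro X hX
        rw [Finset.mem_sdiff] at hX
        obtain ⟨hXT, hXs⟩ := hX
        simp only [hsset, Finset.mem_insert, Finset.mem_singleton, not_or] at hXs
        obtain ⟨hx0, hx1, hxn⟩ := hXs
        have hXle : X.1 ≤ n := hG ▸ contains_order_le (hT1 X hXT).2
        have hX0 : X.1 ≠ 0 := fun h => hx0 (huniq X hXT Y0 hY0
          (iso_trans_s7 (iso_E_of_order_zero h) hY0iso))
        have hX1 : X.1 ≠ 1 := fun h => hx1 (huniq X hXT Y1 hY1
          (iso_trans_s7 (iso_K1_of_order_one h) hY1iso))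
        have hXn : X.1 ≠ n := fun h => hxn (huniq X hXT Yn hYn
          (iso_trans_s7 (iso_of_contains_of_order_eq_s7 (hT1 X hXT).2 (h.trans hG.symm))
            hYniso))
        have := ih X.1 (by omega) X rfl
        rw [if_neg hX0, if_neg hX1] at this
        exact this
      have hsplit := Finset.sum_sdiff (f := mu E) hsub
      rw [Finset.sum_eq_zero hrest, zero_add, h0] at hsplit
      have hssum : ∑ X ∈ sset, mu E X = mu E Y0 + mu E Y1 + mu E Yn := by
        rw [hsset, Finset.sum_insert (by simp [hne01, hne0n]),
          Finset.sum_pair hne1n, add_assoc]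
      have hmuY0 : mu E Y0 = 1 := by
        rw [← hmu.1 E E E Y0 (iso_refl_s7 E) hY0iso]
        simpa using ih 0 (by omega) E rfl
      have hmuY1 : mu E Y1 = -1 := by
        rw [← hmu.1 E E K1 Y1 (iso_refl_s7 E) hY1iso]
        simpa using ih 1 (by omega) K1 rfl
      have hmuYn : mu E Yn = mu E G :=
        (hmu.1 E E Yn G (iso_refl_s7 E) (iso_symm_s7 hYniso))
      rw [hssum, hmuY0, hmuY1, hmuYn] at hsplit
      omega

end FinGraph

/-- For the null graph `∅` (no vertices): `μ(∅,G) = 1` if `|G| = 0`,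
`μ(∅,G) = -1` if `|G| = 1`, and `μ(∅,G) = 0` if `|G| > 1`. -/
theorem mobius_nullGraph (mu : FinGraph → FinGraph → ℤ) (hmu : IsMobius mu)
    (G : FinGraph) :
    (G.order = 0 → mu ⟨0, (⊥ : SimpleGraph (Fin 0))⟩ G = 1) ∧
    (G.order = 1 → mu ⟨0, (⊥ : SimpleGraph (Fin 0))⟩ G = -1) ∧
    (1 < G.order → mu ⟨0, (⊥ : SimpleGraph (Fin 0))⟩ G = 0) := by
  have h := FinGraph.mu_E mu hmu G.order G rfl
  refine ⟨fun h0 => ?_, fun h1 => ?_, fun h2 => ?_⟩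
  · rw [h0] at h; simpa [FinGraph.E] using h
  · rw [h1] at h; simpa [FinGraph.E] using h
  · have e0 : G.order ≠ 0 := by omega
    have e1 : G.order ≠ 1 := by omega
    rw [if_neg e0, if_neg e1] at h; exact h
end
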